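/- Let a,b,c,d be points on the unit circle S¹ occurring in this positive order, and assume a − b + c − d ≠ 0. Then there exist a complex number r with r² = (a−b)(b−c)(c−d)(d−a) and a sign ε ∈ {−1, 1} such that the point w = ((ac − bd) + ε·r)/(a − b + c − d) satisfies |w| < 1, w ∈ J*[a,c] and w ∈ J*[b,d]; i.e., w is the point of intersection of the hyperbolic lines J*[a,c] and J*[b,d]. -/

import Mathlib

open ComplexConjugate

open scoped Classical in
/-- The hyperbolic line in the unit disk with endpoints `a, c` on the unit circle. -/
noncomputable def Jstar (a c : ℂ) : Set ℂ :=
  if c = -a then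
    {z : ℂ | ‖z‖ < 1 ∧ ∃ r : ℝ, z / a = (r : ℂ)}
  else
    {z : ℂ | ‖z‖ < 1 ∧
      ((‖z‖ : ℂ) ^ 2 + 1 =
        conj (2 * (a - c) / (a * conj c - conj a * c)) * z +
          (2 * (a - c) / (a * conj c - conj a * c)) * conj z)}

theorem expDiff' (α β : ℝ) :
    Complex.exp (Complex.I * α) - Complex.exp (Complex.I * β) =
      2 * Complex.I * Real.sin ((α - β)/2) * Complex.exp (Complex.I * (((α + β)/2 : ℝ))) := by
  have e1 : Complex.exp ((((α-β)/2 : ℝ)) * Complex.I) * Complex.exp (Complex.I * (((α + β)/2 : ℝ))) = Complex.exp (Complex.I * α) := by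
    rw [← Complex.exp_add]; congr 1; push_cast; ring
  have e2 : Complex.exp (-(((α-β)/2 : ℝ)) * Complex.I) * Complex.exp (Complex.I * (((α + β)/2 : ℝ))) = Complex.exp (Complex.I * β) := by
    rw [← Complex.exp_add]; congr 1; push_cast; ring
  rw [Complex.ofReal_sin, Complex.sin]
  linear_combination e2 - e1 + (Complex.exp ((((α-β)/2:ℝ)) * Complex.I) - Complex.exp (-(((α-β)/2:ℝ)) * Complex.I)) * Complex.exp (Complex.I * (((α+β)/2:ℝ))) * Complex.I_sq

theorem expNe' (α β : ℝ) (h1 : α < β) (h2 : β < α + 2*Real.pi) :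
    Complex.exp (Complex.I * α) ≠ Complex.exp (Complex.I * β) := by
  intro h
  rw [Complex.exp_eq_exp_iff_exists_int] at h
  obtain ⟨n, hn⟩ := h
  have him := congrArg Complex.im hn
  simp [Complex.mul_im, Complex.add_im] at him
  have hpi := Real.pi_pos
  have hn1 : (-1 : ℝ) < n := by nlinarith
  have hn2 : (n : ℝ) < 0 := by nlinarith
  have hn1' : (-1 : ℤ) < n := by exact_mod_cast hn1
  have hn2' : n < 0 := by exact_mod_cast hn2
  omega

theorem memJstar' (a c w : ℂ) (ha0 : a ≠ 0) (hc0 : c ≠ 0)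
    (hac : conj a = a⁻¹) (hcc : conj c = c⁻¹) (hane : a ≠ c)
    (habs : ‖w‖ < 1)
    (hE : (a + c) * (w * conj w + 1) = 2*w + 2*a*c*conj w) : w ∈ Jstar a c := by
  unfold Jstar
  split_ifs with h
  · subst h
    refine ⟨habs, (w/a).re, ?_⟩
    have hw : w = a^2 * conj w := by linear_combination -hE/2
    have hcw : conj (w / a) = w / a := by
      rw [map_div₀, hac]
      field_simp
      linear_combination -hw
    exact ((Complex.conj_eq_iff_re.mp hcw)).symm ▸ rfl
  · have hsum : a + c ≠ 0 := fun hs => h (by linear_combination hs)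
    have hkey : a * conj c - conj a * c = (a - c) * (a + c) / (a * c) := by
      rw [hcc, hac]; field_simp; ring
    have hne : a * conj c - conj a * c ≠ 0 := by
      rw [hkey]
      exact div_ne_zero (mul_ne_zero (sub_ne_zero.mpr hane) hsum) (mul_ne_zero ha0 hc0)
    have hc₀ : 2 * (a - c) / (a * conj c - conj a * c) = 2 * a * c / (a + c) := by
      rw [hkey, div_div_eq_mul_div,
        div_eq_div_iff (mul_ne_zero (sub_ne_zero.mpr hane) hsum) hsum]
      ring
    refine ⟨habs, ?_⟩
    rw [hc₀, map_div₀, map_mul, map_mul, map_ofNat, hac, hcc, map_add, hac, hcc]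
    have habs2 : ((‖w‖ : ℝ) : ℂ) ^ 2 = w * conj w := by
      rw [Complex.mul_conj, ← Complex.ofReal_pow, Complex.sq_norm]
    rw [habs2]
    have h2 : (2:ℂ) * a⁻¹ * c⁻¹ / (a⁻¹ + c⁻¹) = 2 / (a + c) := by
      rw [inv_add_inv ha0 hc0]
      field_simp
    rw [h2, div_mul_eq_mul_div, div_mul_eq_mul_div, ← add_div, eq_div_iff hsum]
    linear_combination hE

theorem conjW' (a b c d ρ : ℂ) (ha0 : a ≠ 0) (hb0 : b ≠ 0) (hc0 : c ≠ 0) (hd0 : d ≠ 0)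
    (haj : conj a = a⁻¹) (hbj : conj b = b⁻¹) (hcj : conj c = c⁻¹) (hdj : conj d = d⁻¹)
    (hρc : conj ρ = -ρ/(a*b*c*d)) :
    conj ((a*c-b*d+ρ)/(a-b+c-d)) = -(a*c-b*d+ρ)/(b*c*d-a*c*d+a*b*d-a*b*c) := by
  have habcd : a*b*c*d ≠ 0 := by simp [ha0, hb0, hc0, hd0]
  have hDc : conj (a-b+c-d) = (b*c*d-a*c*d+a*b*d-a*b*c)/(a*b*c*d) := by
    simp only [map_add, map_sub, haj, hbj, hcj, hdj]
    field_simp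
  rw [map_div₀, hDc, div_div_eq_mul_div]
  congr 1
  simp only [map_add, map_sub, map_mul, haj, hbj, hcj, hdj, hρc]
  rw [add_mul, sub_mul, div_mul_cancel₀ _ habcd]
  rw [show a⁻¹*c⁻¹*(a*b*c*d) = (a⁻¹*a)*(c⁻¹*c)*(b*d) by ring,
      show b⁻¹*d⁻¹*(a*b*c*d) = (b⁻¹*b)*(d⁻¹*d)*(a*c) by ring,
      inv_mul_cancel₀ ha0, inv_mul_cancel₀ hb0, inv_mul_cancel₀ hc0, inv_mul_cancel₀ hd0]
  ring

theorem circAC' (a b c d ρ w : ℂ) (hD : a-b+c-d ≠ 0)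
    (hD'0 : b*c*d-a*c*d+a*b*d-a*b*c ≠ 0)
    (hρ2 : ρ^2 = (a-b)*(b-c)*(c-d)*(d-a))
    (hw : w = (a*c-b*d+ρ)/(a-b+c-d))
    (hcw : conj w = -(a*c-b*d+ρ)/(b*c*d-a*c*d+a*b*d-a*b*c)) :
    (a+c)*(w * conj w + 1) = 2*w + 2*a*c*(conj w) := by
  rw [hcw, hw]
  rw [div_mul_div_comm, div_add_one (mul_ne_zero hD hD'0), mul_div_assoc', mul_div_assoc', mul_div_assoc', div_add_div _ _ hD hD'0, div_eq_div_iff (mul_ne_zero hD hD'0) (mul_ne_zero hD hD'0)]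
  linear_combination (-(a+c) * ((a-b+c-d)*(b*c*d-a*c*d+a*b*d-a*b*c))) * hρ2

theorem circBD' (a b c d ρ w : ℂ) (hD : a-b+c-d ≠ 0)
    (hD'0 : b*c*d-a*c*d+a*b*d-a*b*c ≠ 0)
    (hρ2 : ρ^2 = (a-b)*(b-c)*(c-d)*(d-a))
    (hw : w = (a*c-b*d+ρ)/(a-b+c-d))
    (hcw : conj w = -(a*c-b*d+ρ)/(b*c*d-a*c*d+a*b*d-a*b*c)) :
    (b+d)*(w * conj w + 1) = 2*w + 2*b*d*(conj w) := by
  rw [hcw, hw]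
  rw [div_mul_div_comm, div_add_one (mul_ne_zero hD hD'0), mul_div_assoc', mul_div_assoc', mul_div_assoc', div_add_div _ _ hD hD'0, div_eq_div_iff (mul_ne_zero hD hD'0) (mul_ne_zero hD hD'0)]
  linear_combination (-(b+d) * ((a-b+c-d)*(b*c*d-a*c*d+a*b*d-a*b*c))) * hρ2

theorem prodOne' (a b c d ρ w w' : ℂ) (hD : a-b+c-d ≠ 0)
    (hD'0 : b*c*d-a*c*d+a*b*d-a*b*c ≠ 0)
    (hρ2 : ρ^2 = (a-b)*(b-c)*(c-d)*(d-a))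
    (hw : w = (a*c-b*d+ρ)/(a-b+c-d))
    (hcw : conj w = -(a*c-b*d+ρ)/(b*c*d-a*c*d+a*b*d-a*b*c))
    (hw' : w' = (a*c-b*d+(-ρ))/(a-b+c-d))
    (hcw' : conj w' = -(a*c-b*d+(-ρ))/(b*c*d-a*c*d+a*b*d-a*b*c)) :
    (w * conj w) * (w' * conj w') = 1 := by
  have key : (a*c-b*d)^2 - ρ^2 = -((a-b+c-d)*(b*c*d-a*c*d+a*b*d-a*b*c)) := by
    linear_combination -hρ2
  rw [hcw, hw, hcw', hw', div_mul_div_comm, div_mul_div_comm, div_mul_div_comm,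
    div_eq_one_iff_eq (mul_ne_zero (mul_ne_zero hD hD'0) (mul_ne_zero hD hD'0))]
  linear_combination ((a*c-b*d)^2 - ρ^2 - (a-b+c-d)*(b*c*d-a*c*d+a*b*d-a*b*c)) * key

theorem Pfact' (θ₁ θ₂ θ₃ θ₄ : ℝ) (a b c d : ℂ)
    (hea : a = Complex.exp (Complex.I * (θ₁ : ℂ)))
    (heb : b = Complex.exp (Complex.I * (θ₂ : ℂ)))
    (hec : c = Complex.exp (Complex.I * (θ₃ : ℂ)))
    (hed : d = Complex.exp (Complex.I * (θ₄ : ℂ))) :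
    (a-b)*(b-c)*(c-d)*(d-a) =
      -((16 * Real.sin ((θ₂-θ₁)/2) * Real.sin ((θ₃-θ₂)/2) * Real.sin ((θ₄-θ₃)/2) * Real.sin ((θ₄-θ₁)/2) : ℝ) : ℂ)
        * (Complex.exp (Complex.I * (((θ₁+θ₂+θ₃+θ₄)/2 : ℝ))))^2 := by
  have hE : Complex.exp (Complex.I * (((θ₁+θ₂)/2 : ℝ))) * Complex.exp (Complex.I * (((θ₂+θ₃)/2 : ℝ)))
      * Complex.exp (Complex.I * (((θ₃+θ₄)/2 : ℝ))) * Complex.exp (Complex.I * (((θ₄+θ₁)/2 : ℝ)))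
      = (Complex.exp (Complex.I * (((θ₁+θ₂+θ₃+θ₄)/2 : ℝ))))^2 := by
    rw [pow_two, ← Complex.exp_add, ← Complex.exp_add, ← Complex.exp_add, ← Complex.exp_add]
    congr 1; push_cast; ring
  have s1 : ((Real.sin ((θ₁-θ₂)/2) : ℝ) : ℂ) = -((Real.sin ((θ₂-θ₁)/2) : ℝ) : ℂ) := by
    rw [show (θ₁-θ₂)/2 = -((θ₂-θ₁)/2) by ring, Real.sin_neg]; push_cast; ring
  have s2 : ((Real.sin ((θ₂-θ₃)/2) : ℝ) : ℂ) = -((Real.sin ((θ₃-θ₂)/2) : ℝ) : ℂ) := by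
    rw [show (θ₂-θ₃)/2 = -((θ₃-θ₂)/2) by ring, Real.sin_neg]; push_cast; ring
  have s3 : ((Real.sin ((θ₃-θ₄)/2) : ℝ) : ℂ) = -((Real.sin ((θ₄-θ₃)/2) : ℝ) : ℂ) := by
    rw [show (θ₃-θ₄)/2 = -((θ₄-θ₃)/2) by ring, Real.sin_neg]; push_cast; ring
  have hq : ((16 * Real.sin ((θ₂-θ₁)/2) * Real.sin ((θ₃-θ₂)/2) * Real.sin ((θ₄-θ₃)/2) * Real.sin ((θ₄-θ₁)/2) : ℝ) : ℂ)
      = 16 * ((Real.sin ((θ₂-θ₁)/2) : ℝ) : ℂ) * ((Real.sin ((θ₃-θ₂)/2) : ℝ) : ℂ) * ((Real.sin ((θ₄-θ₃)/2) : ℝ) : ℂ) * ((Real.sin ((θ₄-θ₁)/2) : ℝ) : ℂ) := by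
    push_cast; ring
  rw [hea, heb, hec, hed, expDiff' θ₁ θ₂, expDiff' θ₂ θ₃, expDiff' θ₃ θ₄, expDiff' θ₄ θ₁,
    s1, s2, s3, hq]
  linear_combination (-16 * ((Real.sin ((θ₂-θ₁)/2) : ℝ) : ℂ) * ((Real.sin ((θ₃-θ₂)/2) : ℝ) : ℂ) * ((Real.sin ((θ₄-θ₃)/2) : ℝ) : ℂ) * ((Real.sin ((θ₄-θ₁)/2) : ℝ) : ℂ) * Complex.I^4) * hE + (-16 * ((Real.sin ((θ₂-θ₁)/2) : ℝ) : ℂ) * ((Real.sin ((θ₃-θ₂)/2) : ℝ) : ℂ) * ((Real.sin ((θ₄-θ₃)/2) : ℝ) : ℂ) * ((Real.sin ((θ₄-θ₁)/2) : ℝ) : ℂ) * (Complex.exp (Complex.I * (((θ₁+θ₂+θ₃+θ₄)/2 : ℝ))))^2 * (Complex.I^2 - 1)) * Complex.I_sq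

theorem stmt15 (θ₁ θ₂ θ₃ θ₄ : ℝ)
    (h12 : θ₁ < θ₂) (h23 : θ₂ < θ₃) (h34 : θ₃ < θ₄) (h41 : θ₄ < θ₁ + 2 * Real.pi)
    (a b c d : ℂ)
    (hea : a = Complex.exp (Complex.I * (θ₁ : ℂ)))
    (heb : b = Complex.exp (Complex.I * (θ₂ : ℂ)))
    (hec : c = Complex.exp (Complex.I * (θ₃ : ℂ)))
    (hed : d = Complex.exp (Complex.I * (θ₄ : ℂ)))
    (hden : a - b + c - d ≠ 0) :
    ∃ r : ℂ, r ^ 2 = (a - b) * (b - c) * (c - d) * (d - a) ∧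
      ∃ ε : ℂ, (ε = 1 ∨ ε = -1) ∧
        ‖(a * c - b * d + ε * r) / (a - b + c - d)‖ < 1 ∧
        (a * c - b * d + ε * r) / (a - b + c - d) ∈ Jstar a c ∧
        (a * c - b * d + ε * r) / (a - b + c - d) ∈ Jstar b d := by
  have hpi := Real.pi_pos
  -- unit circle facts
  have ha1 : ‖a‖ = 1 := by rw [hea]; simp [Complex.norm_exp]
  have hb1 : ‖b‖ = 1 := by rw [heb]; simp [Complex.norm_exp]
  have hc1 : ‖c‖ = 1 := by rw [hec]; simp [Complex.norm_exp]
  have hd1 : ‖d‖ = 1 := by rw [hed]; simp [Complex.norm_exp]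
  have ha0 : a ≠ 0 := by intro h; rw [h] at ha1; simp at ha1
  have hb0 : b ≠ 0 := by intro h; rw [h] at hb1; simp at hb1
  have hc0 : c ≠ 0 := by intro h; rw [h] at hc1; simp at hc1
  have hd0 : d ≠ 0 := by intro h; rw [h] at hd1; simp at hd1
  have haj : conj a = a⁻¹ := (Complex.inv_eq_conj ha1).symm
  have hbj : conj b = b⁻¹ := (Complex.inv_eq_conj hb1).symm
  have hcj : conj c = c⁻¹ := (Complex.inv_eq_conj hc1).symm
  have hdj : conj d = d⁻¹ := (Complex.inv_eq_conj hd1).symm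
  -- distinctness
  have hab : a ≠ b := by rw [hea, heb]; exact expNe' θ₁ θ₂ h12 (by linarith)
  have hacn : a ≠ c := by rw [hea, hec]; exact expNe' θ₁ θ₃ (by linarith) (by linarith)
  have hadn : a ≠ d := by rw [hea, hed]; exact expNe' θ₁ θ₄ (by linarith) (by linarith)
  have hbc : b ≠ c := by rw [heb, hec]; exact expNe' θ₂ θ₃ h23 (by linarith)
  have hbd : b ≠ d := by rw [heb, hed]; exact expNe' θ₂ θ₄ (by linarith) (by linarith)
  have hcd : c ≠ d := by rw [hec, hed]; exact expNe' θ₃ θ₄ h34 (by linarith)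
  -- the square root
  have hq0 : (0:ℝ) < 16 * Real.sin ((θ₂-θ₁)/2) * Real.sin ((θ₃-θ₂)/2) * Real.sin ((θ₄-θ₃)/2) * Real.sin ((θ₄-θ₁)/2) := by
    have t1 : 0 < Real.sin ((θ₂-θ₁)/2) := Real.sin_pos_of_pos_of_lt_pi (by linarith) (by linarith)
    have t2 : 0 < Real.sin ((θ₃-θ₂)/2) := Real.sin_pos_of_pos_of_lt_pi (by linarith) (by linarith)
    have t3 : 0 < Real.sin ((θ₄-θ₃)/2) := Real.sin_pos_of_pos_of_lt_pi (by linarith) (by linarith)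
    have t4 : 0 < Real.sin ((θ₄-θ₁)/2) := Real.sin_pos_of_pos_of_lt_pi (by linarith) (by linarith)
    positivity
  set q : ℝ := 16 * Real.sin ((θ₂-θ₁)/2) * Real.sin ((θ₃-θ₂)/2) * Real.sin ((θ₄-θ₃)/2) * Real.sin ((θ₄-θ₁)/2) with hqdef
  set r : ℂ := Complex.I * ((Real.sqrt q : ℝ) : ℂ) * Complex.exp (Complex.I * (((θ₁+θ₂+θ₃+θ₄)/2 : ℝ))) with hrdef
  have hr2 : r^2 = (a-b)*(b-c)*(c-d)*(d-a) := by
    rw [Pfact' θ₁ θ₂ θ₃ θ₄ a b c d hea heb hec hed, hrdef]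
    have hsq : ((Real.sqrt q : ℝ) : ℂ)^2 = (q : ℂ) := by
      rw [← Complex.ofReal_pow, Real.sq_sqrt hq0.le]
    calc (Complex.I * ((Real.sqrt q : ℝ) : ℂ) * Complex.exp (Complex.I * (((θ₁+θ₂+θ₃+θ₄)/2 : ℝ))))^2
        = Complex.I^2 * ((Real.sqrt q : ℝ) : ℂ)^2 * (Complex.exp (Complex.I * (((θ₁+θ₂+θ₃+θ₄)/2 : ℝ))))^2 := by ring
      _ = -(q:ℂ) * (Complex.exp (Complex.I * (((θ₁+θ₂+θ₃+θ₄)/2 : ℝ))))^2 := by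
          rw [hsq, Complex.I_sq]; ring
  have habcdE : a*b*c*d = (Complex.exp (Complex.I * (((θ₁+θ₂+θ₃+θ₄)/2 : ℝ))))^2 := by
    rw [hea, heb, hec, hed, ← Complex.exp_add, ← Complex.exp_add, ← Complex.exp_add,
      pow_two, ← Complex.exp_add]
    congr 1; push_cast; ring
  have hrc : conj r = -r/(a*b*c*d) := by
    rw [habcdE, hrdef, map_mul, map_mul, Complex.conj_I, Complex.conj_ofReal, ← Complex.exp_conj,
      show conj (Complex.I * (((θ₁+θ₂+θ₃+θ₄)/2 : ℝ) : ℂ)) = -(Complex.I * (((θ₁+θ₂+θ₃+θ₄)/2 : ℝ) : ℂ)) from by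
        rw [map_mul, Complex.conj_I, Complex.conj_ofReal]; ring,
      Complex.exp_neg]
    field_simp [Complex.exp_ne_zero]
  have hD'0 : b*c*d-a*c*d+a*b*d-a*b*c ≠ 0 := by
    intro h
    apply hden
    have h1 : conj (a-b+c-d) = (b*c*d-a*c*d+a*b*d-a*b*c)/(a*b*c*d) := by
      simp only [map_add, map_sub, haj, hbj, hcj, hdj]; field_simp
    have h2 : conj (a-b+c-d) = 0 := by rw [h1, h]; simp
    have h3 := congrArg conj h2
    simpa using h3
  -- conjugates of the two candidate points
  have hrc' : conj (-r) = -(-r)/(a*b*c*d) := by rw [map_neg, hrc]; ring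
  have hcwp : conj ((a*c-b*d+r)/(a-b+c-d)) = -(a*c-b*d+r)/(b*c*d-a*c*d+a*b*d-a*b*c) :=
    conjW' a b c d r ha0 hb0 hc0 hd0 haj hbj hcj hdj hrc
  have hcwm : conj ((a*c-b*d+(-r))/(a-b+c-d)) = -(a*c-b*d+(-r))/(b*c*d-a*c*d+a*b*d-a*b*c) :=
    conjW' a b c d (-r) ha0 hb0 hc0 hd0 haj hbj hcj hdj hrc'
  have hr2' : (-r)^2 = (a-b)*(b-c)*(c-d)*(d-a) := by rw [neg_pow]; simpa using hr2
  -- circle equations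
  have eacp := circAC' a b c d r _ hden hD'0 hr2 rfl hcwp
  have ebdp := circBD' a b c d r _ hden hD'0 hr2 rfl hcwp
  have eacm := circAC' a b c d (-r) _ hden hD'0 hr2' rfl hcwm
  have ebdm := circBD' a b c d (-r) _ hden hD'0 hr2' rfl hcwm
  -- product of norms is 1
  have hprod := prodOne' a b c d r ((a*c-b*d+r)/(a-b+c-d)) ((a*c-b*d+(-r))/(a-b+c-d))
    hden hD'0 hr2 rfl hcwp rfl hcwm
  have hnq : Complex.normSq ((a*c-b*d+r)/(a-b+c-d)) * Complex.normSq ((a*c-b*d+(-r))/(a-b+c-d)) = 1 := by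
    rw [Complex.mul_conj, Complex.mul_conj] at hprod
    exact_mod_cast hprod
  -- a point with |w| = 1 on both lines is impossible
  have contra : ∀ w : ℂ, (a+c)*(w*conj w+1) = 2*w+2*a*c*(conj w) →
      (b+d)*(w*conj w+1) = 2*w+2*b*d*(conj w) → Complex.normSq w = 1 → False := by
    intro w eac ebd hn
    have hmc : w * conj w = 1 := by rw [Complex.mul_conj, hn]; simp
    have h1 : (w - a)*(w - c) = 0 := by
      linear_combination (-w/2)*eac + ((a+c)*w/2 - a*c)*hmc
    have h2 : (w - b)*(w - d) = 0 := by
      linear_combination (-w/2)*ebd + ((b+d)*w/2 - b*d)*hmc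
    rcases mul_eq_zero.mp h1 with h | h <;> rcases mul_eq_zero.mp h2 with h' | h' <;>
      rw [sub_eq_zero] at h h'
    · exact hab (h.symm.trans h')
    · exact hadn (h.symm.trans h')
    · exact hbc (h'.symm.trans h)
    · exact hcd (h.symm.trans h')
  -- choose the sign
  refine ⟨r, hr2, ?_⟩
  rcases lt_trichotomy (Complex.normSq ((a*c-b*d+r)/(a-b+c-d))) 1 with hlt | heq | hgt
  · refine ⟨1, Or.inl rfl, ?_⟩
    rw [show a*c - b*d + 1*r = a*c - b*d + r by ring]
    have habs : ‖(a*c-b*d+r)/(a-b+c-d)‖ < 1 := by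
      have h2 : ‖(a*c-b*d+r)/(a-b+c-d)‖ ^ 2 < 1 := by
        rw [Complex.sq_norm]; exact hlt
      nlinarith [norm_nonneg ((a*c-b*d+r)/(a-b+c-d))]
    exact ⟨habs, memJstar' a c _ ha0 hc0 haj hcj hacn habs eacp,
      memJstar' b d _ hb0 hd0 hbj hdj hbd habs ebdp⟩
  · exact absurd heq (fun hh => contra _ eacp ebdp hh)
  · refine ⟨-1, Or.inr rfl, ?_⟩
    rw [show a*c - b*d + (-1)*r = a*c - b*d + (-r) by ring]
    have hlt : Complex.normSq ((a*c-b*d+(-r))/(a-b+c-d)) < 1 := by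
      nlinarith [Complex.normSq_nonneg ((a*c-b*d+(-r))/(a-b+c-d))]
    have habs : ‖(a*c-b*d+(-r))/(a-b+c-d)‖ < 1 := by
      have h2 : ‖(a*c-b*d+(-r))/(a-b+c-d)‖ ^ 2 < 1 := by
        rw [Complex.sq_norm]; exact hlt
      nlinarith [norm_nonneg ((a*c-b*d+(-r))/(a-b+c-d))]
    exact ⟨habs, memJstar' a c _ ha0 hc0 haj hcj hacn habs eacm,
      memJstar' b d _ hb0 hd0 hbj hdj hbd habs ebdm⟩
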